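/- A monotonic and asymptotically live streaming ranking algorithm induces a well-defined total order on a countably infinite transaction set: given infinite ordering preferences (σ̂_1, ..., σ̂_n), define τ ≺ τ' iff there exists a finite truncation of the inputs on which the algorithm outputs τ before τ'. Then ≺ is a strict total order on the set of all transactions. -/

import Mathlib

/-- Uniqueness of a split around an element of a `Nodup` list. -/
lemma uniq_split {T : Type*} {b : T} :
    ∀ (s1 : List T) (t1 s2 t2 : List T), (s1 ++ b :: t1).Nodup →
      s1 ++ b :: t1 = s2 ++ b :: t2 → s1 = s2 ∧ t1 = t2 := by
  intro s1
  induction s1 with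
  | nil =>
    intro t1 s2 t2 hnd heq
    cases s2 with
    | nil => simpa using heq
    | cons y s2' =>
      exfalso
      simp only [List.nil_append, List.cons_append, List.cons.injEq] at heq
      obtain ⟨hy, ht⟩ := heq
      simp only [List.nil_append, List.nodup_cons, ht] at hnd
      exact hnd.1 (by simp)
  | cons x s1' ih =>
    intro t1 s2 t2 hnd heq
    cases s2 with
    | nil =>
      exfalso
      rw [List.cons_append, List.nil_append] at heq
      injection heq with hx ht
      rw [List.cons_append, List.nodup_cons] at hnd
      exact hnd.1 (by rw [hx]; simp)
    | cons y s2' =>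
      simp only [List.cons_append, List.cons.injEq] at heq
      obtain ⟨hxy, ht⟩ := heq
      rw [List.cons_append, List.nodup_cons] at hnd
      obtain ⟨h1, h2⟩ := ih t1 s2' t2 hnd.2 ht
      exact ⟨by rw [hxy, h1], h2⟩

theorem streaming_induces_total_order {T : Type*} {n : ℕ} (hn : 0 < n)
    (σ : Fin n → ℕ → T) (hσ : ∀ i, Function.Bijective (σ i))
    (A : (Fin n → List T) → List T)
    (hmono : ∀ g g' : Fin n → List T,
      (∀ i, (g i).IsPrefix (g' i)) → (A g).IsPrefix (A g'))
    (hnodup : ∀ g : Fin n → List T, (A g).Nodup)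
    (hlive : ∀ τ : T, ∃ N : Fin n → ℕ,
      τ ∈ A (fun i => (List.range (N i)).map (σ i))) :
    IsStrictTotalOrder T (fun τ τ' : T =>
      ∃ (N : Fin n → ℕ) (l1 l2 l3 : List T),
        A (fun i => (List.range (N i)).map (σ i)) = l1 ++ τ :: (l2 ++ τ' :: l3)) := by
  classical
  set out : (Fin n → ℕ) → List T :=
    fun N => A (fun i => (List.range (N i)).map (σ i)) with hout
  have hpre : ∀ N M : Fin n → ℕ, (∀ i, N i ≤ M i) → (out N).IsPrefix (out M) := by
    intro N M h
    apply hmono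
    intro i
    apply List.IsPrefix.map
    have : List.range (N i) = (List.range (M i)).take (N i) := by
      rw [List.take_range, min_eq_left (h i)]
    rw [this]
    exact List.take_prefix _ _
  have htri : ∀ a b : T, (∃ N l1 l2 l3, out N = l1 ++ a :: (l2 ++ b :: l3)) ∨ a = b ∨
      (∃ N l1 l2 l3, out N = l1 ++ b :: (l2 ++ a :: l3)) := by
    intro a b
    by_cases hab : a = b
    · exact Or.inr (Or.inl hab)
    obtain ⟨N, hNa⟩ := hlive a
    obtain ⟨M, hMb⟩ := hlive b
    set K : Fin n → ℕ := fun i => max (N i) (M i) with hK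
    have ha : a ∈ out K := (hpre N K fun i => le_max_left _ _).subset hNa
    have hb : b ∈ out K := (hpre M K fun i => le_max_right _ _).subset hMb
    obtain ⟨s, t, hst⟩ := List.append_of_mem hb
    rw [hst] at ha
    rcases List.mem_append.mp ha with hs | hct
    · obtain ⟨s1, s2, hs12⟩ := List.append_of_mem hs
      refine Or.inl ⟨K, s1, s2, t, ?_⟩
      rw [hst, hs12]; simp
    · rcases List.mem_cons.mp hct with h | ht
      · exact absurd h hab
      · obtain ⟨t1, t2, ht12⟩ := List.append_of_mem ht
        refine Or.inr (Or.inr ⟨K, s, t1, t2, ?_⟩)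
        rw [hst, ht12]
  have hirr : ∀ a : T, ¬ ∃ N l1 l2 l3, out N = l1 ++ a :: (l2 ++ a :: l3) := by
    rintro a ⟨N, l1, l2, l3, h⟩
    have hnd : (out N).Nodup := hnodup _
    rw [h] at hnd
    simp [List.nodup_append] at hnd
  have htrans : ∀ a b c : T, (∃ N l1 l2 l3, out N = l1 ++ a :: (l2 ++ b :: l3)) →
      (∃ N l1 l2 l3, out N = l1 ++ b :: (l2 ++ c :: l3)) →
      (∃ N l1 l2 l3, out N = l1 ++ a :: (l2 ++ c :: l3)) := by
    rintro a b c ⟨N, l1, l2, l3, h1⟩ ⟨M, m1, m2, m3, h2⟩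
    set K : Fin n → ℕ := fun i => max (N i) (M i) with hK
    obtain ⟨t, ht⟩ := hpre N K fun i => le_max_left _ _
    obtain ⟨u, hu⟩ := hpre M K fun i => le_max_right _ _
    have e1 : out K = (l1 ++ a :: l2) ++ b :: (l3 ++ t) := by
      rw [← ht, h1]; simp
    have e2 : out K = m1 ++ b :: (m2 ++ c :: (m3 ++ u)) := by
      rw [← hu, h2]; simp
    have hnd : (out K).Nodup := hnodup _
    rw [e1] at hnd
    obtain ⟨hs, -⟩ := uniq_split (l1 ++ a :: l2) (l3 ++ t) m1 (m2 ++ c :: (m3 ++ u))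
      hnd (by rw [← e1, e2])
    refine ⟨K, l1, l2 ++ b :: m2, m3 ++ u, ?_⟩
    rw [e2, ← hs]
    simp
  exact { trichotomous := fun a b h1 h2 => ((htri a b).resolve_left h1).resolve_right h2, irrefl := hirr, trans := htrans }
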